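/- Let G₁ and G₂ be DAGs on vertex set V and Π a partition of V. If M_{G₁,Π} = M_{G₂,Π}, then pa_{G₁}(i) = pa_{G₂}(i) for every node i that belongs to a block of Π of size at least 2. -/

import Mathlib

set_option linter.unusedSectionVars false
set_option maxHeartbeats 1000000

open Matrix

/-- The partially homoscedastic linear Gaussian model `M_{G,Π}`: covariance matrices
`(I-Λ)^{-T} diag(ω) (I-Λ)^{-1}` with `Λ` supported on the edges `E` and `ω` positive,
with `ω a = ω b` whenever `r a b` (i.e. `a, b` in the same block of the partition).
Taking `r` to be equality gives the ordinary model `M_G` with arbitrary variances. -/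
def PHModel {V : Type*} [Fintype V] [DecidableEq V]
    (E : V → V → Prop) (r : V → V → Prop) : Set (Matrix V V ℝ) :=
  {C | ∃ (Λ : Matrix V V ℝ) (ω : V → ℝ),
    (∀ a b, ¬ E a b → Λ a b = 0) ∧ (∀ a, 0 < ω a) ∧
    (∀ a b, r a b → ω a = ω b) ∧
    C = ((1 - Λ)ᵀ)⁻¹ * Matrix.diagonal ω * (1 - Λ)⁻¹}

section AuxStmt13
open Relation

variable {V : Type*} [Fintype V] [DecidableEq V]

private lemma single_mul_apply' (p q : V) (v : ℝ) (M : Matrix V V ℝ) (a b : V) :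
    (Matrix.single p q v * M) a b = if a = p then v * M q b else 0 := by
  simp only [Matrix.mul_apply, Matrix.single, Matrix.of_apply]
  by_cases h : a = p
  · subst h
    rw [Finset.sum_eq_single q] <;> simp +contextual [eq_comm]
  · rw [Finset.sum_eq_zero] <;> intros <;>
      simp [show p ≠ a from fun hh => h hh.symm, h]

private lemma one_add_single_mul' (p q : V) (v : ℝ) (M : Matrix V V ℝ) (a b : V) :
    ((1 + Matrix.single p q v) * M) a b = M a b + if a = p then v * M q b else 0 := by
  rw [Matrix.add_mul, Matrix.one_mul, Matrix.add_apply, single_mul_apply']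

private lemma single_apply' (p q : V) (v : ℝ) (a b : V) :
    (Matrix.single p q v) a b = if a = p ∧ b = q then v else 0 := by
  simp [Matrix.single, and_comm, eq_comm]

private lemma single_transpose' (p q : V) (v : ℝ) :
    (Matrix.single p q v)ᵀ = Matrix.single q p v := by
  ext a b
  simp only [Matrix.transpose_apply, single_apply', and_comm]

/-- Key uniqueness lemma: if `Rᵀ D R` is diagonal with positive entries, `D` diagonal
positive, and `R` is supported on the weak "upper triangle" of `f`, then `R` is
diagonal and a diagonal identity holds. -/
private lemma key_lemma' (f : V → ℕ) (d ω : V → ℝ) (R : Matrix V V ℝ)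
    (hd : ∀ a, 0 < d a) (hω : ∀ a, 0 < ω a)
    (hsupp : ∀ a b, R a b ≠ 0 → a = b ∨ f a < f b)
    (heq : Rᵀ * Matrix.diagonal d * R = Matrix.diagonal ω) :
    (∀ a b, a ≠ b → R a b = 0) ∧ (∀ a, ω a = d a * (R a a * R a a)) := by
  have hentry : ∀ a b, (∑ c, R c a * d c * R c b) = Matrix.diagonal ω a b := by
    intro a b
    have := congrFun (congrFun heq a) b
    simpa [Matrix.mul_apply, Matrix.transpose_apply, Matrix.diagonal_apply, ite_mul,
      mul_ite, zero_mul, mul_zero, Finset.sum_ite_eq, Finset.mem_univ] using this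
  have key : ∀ n a, f a = n → ∀ b, b ≠ a → R a b = 0 := by
    intro n
    induction n using Nat.strong_induction_on with
    | _ n IH =>
      intro a ha b hb
      have hcol : ∀ c, c ≠ a → R c a = 0 := by
        intro c hc
        by_cases h0 : R c a = 0
        · exact h0
        · rcases hsupp c a h0 with h | h
          · exact absurd h hc
          · exact IH (f c) (ha ▸ h) c rfl a (fun he => hc he.symm)
      have hdiag : ω a = d a * (R a a * R a a) := by
        have := hentry a a
        rw [Finset.sum_eq_single a] at this
        · rw [Matrix.diagonal_apply_eq] at this; rw [← this]; ring
        · intro c _ hc; rw [hcol c hc]; ring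
        · intro h; exact absurd (Finset.mem_univ a) h
      have hRaa : R a a ≠ 0 := by
        intro h0
        rw [h0] at hdiag
        simpa [hdiag] using (hω a)
      have := hentry a b
      rw [Finset.sum_eq_single a] at this
      · rw [Matrix.diagonal_apply_ne _ (fun he => hb he.symm)] at this
        rcases mul_eq_zero.mp this with h | h
        · rcases mul_eq_zero.mp h with h' | h'
          · exact absurd h' hRaa
          · exact absurd h' (hd a).ne'
        · exact h
      · intro c _ hc; rw [hcol c hc]; ring
      · intro h; exact absurd (Finset.mem_univ a) h
  refine ⟨fun a b hab => key (f a) a rfl b hab.symm, fun a => ?_⟩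
  have := hentry a a
  rw [Finset.sum_eq_single a] at this
  · rw [Matrix.diagonal_apply_eq] at this; rw [← this]; ring
  · intro c _ hc; rw [key (f c) c rfl a (Ne.symm hc)]; ring
  · intro h; exact absurd (Finset.mem_univ a) h

/-- rank function from an acyclic relation -/
private noncomputable def rnk' (E : V → V → Prop) (a : V) : ℕ := {c | TransGen E c a}.ncard

private lemma rnk_lt' {E : V → V → Prop} (hacyc : ∀ x, ¬ TransGen E x x) {a b : V}
    (h : TransGen E a b) : rnk' E a < rnk' E b := by
  apply Set.ncard_lt_ncard _ (Set.toFinite _)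
  constructor
  · intro c hc; exact hc.trans h
  · intro hsub
    exact hacyc a (hsub h)

private lemma acyc_union_of_trans' {E : V → V → Prop} (hacyc : ∀ x, ¬ TransGen E x x) {k i : V}
    (h : TransGen E k i) : ∀ x, ¬ TransGen (fun a b => E a b ∨ (a = k ∧ b = i)) x x := by
  intro x hx
  apply hacyc x
  have hmono : ∀ a b, (fun a b => E a b ∨ (a = k ∧ b = i)) a b → TransGen E a b := by
    rintro a b (hab | ⟨rfl, rfl⟩)
    · exact TransGen.single hab
    · exact h
  have := TransGen.mono hmono x x hx
  rwa [Relation.transGen_idem] at this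

private lemma trans_union_cases' {E : V → V → Prop} {i k : V} {a b : V}
    (h : TransGen (fun a b => E a b ∨ (a = i ∧ b = k)) a b) :
    TransGen E a b ∨ (ReflTransGen E a i ∧ ReflTransGen E k b) := by
  induction h with
  | single hab =>
    rcases hab with hab | ⟨rfl, rfl⟩
    · exact Or.inl (TransGen.single hab)
    · exact Or.inr ⟨ReflTransGen.refl, ReflTransGen.refl⟩
  | tail _ hbc IH =>
    rename_i b' c' _
    rcases hbc with hbc | ⟨rfl, rfl⟩
    · rcases IH with h1 | ⟨h1, h2⟩
      · exact Or.inl (h1.tail hbc)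
      · exact Or.inr ⟨h1, h2.tail hbc⟩
    · rcases IH with h1 | ⟨h1, h2⟩
      · exact Or.inr ⟨h1.to_reflTransGen, ReflTransGen.refl⟩
      · exact Or.inr ⟨h1, ReflTransGen.refl⟩

private lemma acyc_union_of_not_trans' {E : V → V → Prop} (hacyc : ∀ x, ¬ TransGen E x x)
    {i k : V} (hik : i ≠ k) (h : ¬ TransGen E k i) :
    ∀ x, ¬ TransGen (fun a b => E a b ∨ (a = i ∧ b = k)) x x := by
  intro x hx
  rcases trans_union_cases' hx with h1 | ⟨h1, h2⟩
  · exact hacyc x h1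
  · have : ReflTransGen E k i := h2.trans h1
    rcases (Relation.reflTransGen_iff_eq_or_transGen.mp this) with he | ht
    · exact hik he
    · exact h ht

/-- Main auxiliary step: one inclusion of models transfers an edge into a
non-singleton block. -/
private lemma aux_stmt13 (E₁ E₂ : V → V → Prop)
    (hacyc₁ : ∀ x, ¬ TransGen E₁ x x) (hacyc₂ : ∀ x, ¬ TransGen E₂ x x)
    (r : V → V → Prop)
    (hsub : PHModel E₁ r ⊆ PHModel E₂ r)
    (i j k : V) (hji : j ≠ i) (hrij : r i j) (h1 : E₁ k i) : E₂ k i := by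
  by_contra hki2
  have hki : k ≠ i := fun he => hacyc₁ i (TransGen.single (he ▸ h1))
  set Λ : Matrix V V ℝ := Matrix.single k i 1 with hΛ
  set C : Matrix V V ℝ := (1 + Λᵀ) * (1 + Λ) with hCdef
  have hΛΛ : Λ * Λ = 0 := by
    ext a b
    rw [hΛ, single_mul_apply', single_apply']
    simp [hki, Ne.symm hki]
  have hinv1 : (1 - Λ)⁻¹ = 1 + Λ := by
    apply Matrix.inv_eq_left_inv
    rw [mul_sub, mul_one, add_mul, one_mul, hΛΛ, add_zero, add_sub_cancel_right]
  have hinvT : ((1 - Λ)ᵀ)⁻¹ = 1 + Λᵀ := by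
    apply Matrix.inv_eq_left_inv
    rw [Matrix.transpose_sub, Matrix.transpose_one]
    have hΛΛT : Λᵀ * Λᵀ = 0 := by
      rw [← Matrix.transpose_mul, hΛΛ, Matrix.transpose_zero]
    rw [mul_sub, mul_one, add_mul, one_mul, hΛΛT, add_zero, add_sub_cancel_right]
  have hd1 : Matrix.diagonal (fun _ : V => (1:ℝ)) = 1 := Matrix.diagonal_one
  have hCmem : C ∈ PHModel E₁ r := by
    refine ⟨Λ, fun _ => 1, ?_, fun _ => one_pos, fun _ _ _ => rfl, ?_⟩
    · intro a b hnab
      rw [hΛ, single_apply']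
      split_ifs with h
      · exact absurd (by rw [h.1, h.2]; exact h1) hnab
      · rfl
    · rw [hinvT, hinv1, hd1, mul_one]
  obtain ⟨M, ω, hsuppM, hω, hωr, hC⟩ := hsub hCmem
  have hMdiag : ∀ a, M a a = 0 := fun a =>
    hsuppM a a (fun h => hacyc₂ a (TransGen.single h))
  have hMki : M k i = 0 := hsuppM k i hki2
  have hCapply : ∀ a b, C a b = (if a = b then 1 else 0) + (if a = k ∧ b = i then 1 else 0)
      + (if a = i ∧ b = k then 1 else 0) + (if a = i ∧ b = i then 1 else 0) := by
    intro a b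
    rw [hCdef, hΛ, single_transpose', one_add_single_mul']
    rw [Matrix.add_apply, Matrix.one_apply, single_apply',
      Matrix.add_apply, Matrix.one_apply, single_apply']
    by_cases ha : a = i <;> by_cases hb : b = i <;> by_cases hab : a = b <;>
      by_cases hbk : b = k <;> by_cases hak : a = k <;>
      (try simp_all [hki]) <;> (try split_ifs) <;> (try simp_all) <;> (try norm_num) <;> (try ring) <;> (try simp_all [eq_comm]) <;> (try norm_num)
  have hCkk : C k k = 1 := by
    rw [hCapply]
    simp [hki, Ne.symm hki]
  have hdet : IsUnit (1 - M).det := by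
    by_contra hdet
    have h0 : (1 - M)⁻¹ = 0 := Matrix.nonsing_inv_apply_not_isUnit _ hdet
    rw [h0, mul_zero] at hC
    rw [hC] at hCkk
    simpa using hCkk
  have hdetT : IsUnit ((1 - M)ᵀ).det := by rwa [Matrix.det_transpose]
  have heqn : (1 - M)ᵀ * C * (1 - M) = Matrix.diagonal ω := by
    rw [hC]
    rw [show (1 - M)ᵀ * (((1 - M)ᵀ)⁻¹ * Matrix.diagonal ω * (1 - M)⁻¹) * (1 - M)
        = ((1 - M)ᵀ * ((1 - M)ᵀ)⁻¹) * Matrix.diagonal ω * ((1 - M)⁻¹ * (1 - M)) by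
      simp only [Matrix.mul_assoc]]
    rw [Matrix.mul_nonsing_inv _ hdetT, Matrix.nonsing_inv_mul _ hdet, one_mul, mul_one]
  by_cases hpath : TransGen E₂ k i
  · -- Case 1: there is an E₂-path from k to i; use order with f k < f i
    set Ep : V → V → Prop := fun a b => E₂ a b ∨ (a = k ∧ b = i) with hEp
    have hacycp := acyc_union_of_trans' hacyc₂ hpath
    set f : V → ℕ := rnk' Ep with hf
    have hfE : ∀ a b, E₂ a b → f a < f b := fun a b h =>
      rnk_lt' hacycp (TransGen.single (Or.inl h))
    have hfki : f k < f i := rnk_lt' hacycp (TransGen.single (Or.inr ⟨rfl, rfl⟩))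
    set R : Matrix V V ℝ := (1 + Λ) * (1 - M) with hR
    have hRapply : ∀ a b, R a b = ((if a = b then 1 else 0) - M a b)
        + (if a = k then ((if i = b then 1 else 0) - M i b) else 0) := by
      intro a b
      rw [hR, hΛ, one_add_single_mul', Matrix.sub_apply, Matrix.one_apply,
        Matrix.sub_apply, Matrix.one_apply]
      by_cases h : a = k <;> simp [h]
    have hReq : Rᵀ * Matrix.diagonal (fun _ : V => (1:ℝ)) * R = Matrix.diagonal ω := by
      rw [hd1, mul_one, ← heqn, hR, hCdef]
      simp only [Matrix.transpose_mul, Matrix.transpose_add, Matrix.transpose_one,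
        Matrix.mul_assoc]
    have hsuppR : ∀ a b, R a b ≠ 0 → a = b ∨ f a < f b := by
      intro a b hab
      by_cases hor : a = b ∨ f a < f b
      · exact hor
      · exfalso
        apply hab
        rw [not_or] at hor
        obtain ⟨hab', hfab⟩ := hor
        have hM : M a b = 0 := by
          by_cases h : E₂ a b
          · exact absurd (hfE a b h) hfab
          · exact hsuppM a b h
        have hterm : (if a = k then ((if i = b then 1 else 0) - M i b) else (0:ℝ)) = 0 := by
          by_cases hak : a = k
          · rw [if_pos hak]
            have hbi : b ≠ i := by
              intro hbi
              exact hfab (by rw [hak, hbi]; exact hfki)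
            have hMib : M i b = 0 := by
              by_cases h : E₂ i b
              · exact absurd (lt_trans (by rw [hak]; exact hfki) (hfE i b h)) hfab
              · exact hsuppM i b h
            rw [hMib, if_neg (fun h => hbi h.symm)]
            norm_num
          · rw [if_neg hak]
        rw [hRapply, if_neg hab', hM, hterm]
        norm_num
    obtain ⟨hoff, _⟩ := key_lemma' f (fun _ => 1) ω R (fun _ => one_pos) hω hsuppR hReq
    have h0 : R k i = 0 := hoff k i hki
    rw [hRapply] at h0
    simp [hki, hMki, hMdiag i] at h0
  · -- Case 2: no E₂-path from k to i; use order with f i < f k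
    set Ep : V → V → Prop := fun a b => E₂ a b ∨ (a = i ∧ b = k) with hEp
    have hacycp := acyc_union_of_not_trans' hacyc₂ (Ne.symm hki) hpath
    set f : V → ℕ := rnk' Ep with hf
    have hfE : ∀ a b, E₂ a b → f a < f b := fun a b h =>
      rnk_lt' hacycp (TransGen.single (Or.inl h))
    have hfik : f i < f k := rnk_lt' hacycp (TransGen.single (Or.inr ⟨rfl, rfl⟩))
    set N : Matrix V V ℝ := Matrix.single i k (1/2) with hN
    set d₀ : V → ℝ := fun a => if a = i then 2 else if a = k then 1/2 else 1 with hd₀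
    have hd₀pos : ∀ a, 0 < d₀ a := by
      intro a
      rw [hd₀]
      dsimp only
      split_ifs <;> norm_num
    set R : Matrix V V ℝ := (1 + N) * (1 - M) with hR
    have hRapply : ∀ a b, R a b = ((if a = b then 1 else 0) - M a b)
        + (if a = i then (1/2) * ((if k = b then 1 else 0) - M k b) else 0) := by
      intro a b
      rw [hR, hN, one_add_single_mul', Matrix.sub_apply, Matrix.one_apply,
        Matrix.sub_apply, Matrix.one_apply]
    have hCS : C = (1 + N)ᵀ * Matrix.diagonal d₀ * (1 + N) := by
      rw [Matrix.mul_assoc]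
      ext a b
      rw [Matrix.transpose_add, Matrix.transpose_one, hN, single_transpose',
        one_add_single_mul']
      rw [Matrix.diagonal_mul, Matrix.diagonal_mul]
      rw [Matrix.add_apply, Matrix.one_apply, single_apply',
        Matrix.add_apply, Matrix.one_apply, single_apply']
      rw [hCapply, hd₀]
      dsimp only
      by_cases ha : a = i <;> by_cases hb : b = i <;> by_cases hab : a = b <;>
        by_cases hbk : b = k <;> by_cases hak : a = k <;>
        (try simp_all [hki]) <;> (try split_ifs) <;> (try simp_all) <;> (try norm_num) <;> (try ring) <;> (try simp_all [eq_comm]) <;> (try norm_num)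
    have hReq : Rᵀ * Matrix.diagonal d₀ * R = Matrix.diagonal ω := by
      rw [← heqn, hCS, hR]
      simp only [Matrix.transpose_mul, Matrix.mul_assoc]
    have hsuppR : ∀ a b, R a b ≠ 0 → a = b ∨ f a < f b := by
      intro a b hab
      by_cases hor : a = b ∨ f a < f b
      · exact hor
      · exfalso
        apply hab
        rw [not_or] at hor
        obtain ⟨hab', hfab⟩ := hor
        have hM : M a b = 0 := by
          by_cases h : E₂ a b
          · exact absurd (hfE a b h) hfab
          · exact hsuppM a b h
        have hterm : (if a = i then (1/2) * ((if k = b then 1 else 0) - M k b) else (0:ℝ)) = 0 := by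
          by_cases hai : a = i
          · rw [if_pos hai]
            have hbk : b ≠ k := by
              intro hbk
              exact hfab (by rw [hai, hbk]; exact hfik)
            have hMkb : M k b = 0 := by
              by_cases h : E₂ k b
              · exact absurd (lt_trans (by rw [hai]; exact hfik) (hfE k b h)) hfab
              · exact hsuppM k b h
            rw [hMkb, if_neg (fun h => hbk h.symm)]
            norm_num
          · rw [if_neg hai]
        rw [hRapply, if_neg hab', hM, hterm]
        norm_num
    obtain ⟨hoff, hdiagid⟩ := key_lemma' f d₀ ω R hd₀pos hω hsuppR hReq
    have hRii : R i i = 1 := by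
      rw [hRapply]
      simp [hMdiag i, hMki, hki]
    have hωi : ω i = 2 := by
      have := hdiagid i
      rw [hRii, hd₀] at this
      simpa using this
    by_cases hjk : j = k
    · have hRkk : R k k = 1 := by
        rw [hRapply]
        simp [hMdiag k, hki]
      have hωk : ω k = 1/2 := by
        have := hdiagid k
        rw [hRkk, hd₀] at this
        simpa [hki] using this
      have := hωr i j hrij
      rw [hωi, hjk, hωk] at this
      norm_num at this
    · have hRjj : R j j = 1 := by
        rw [hRapply]
        simp [hMdiag j, hji]
      have hωj : ω j = 1 := by
        have := hdiagid j
        rw [hRjj, hd₀] at this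
        simpa [hji, hjk] using this
      have := hωr i j hrij
      rw [hωi, hωj] at this
      norm_num at this

end AuxStmt13

/-- if `M_{G₁,Π} = M_{G₂,Π}` then `pa_{G₁}(i) = pa_{G₂}(i)` for every
node `i` that belongs to a block of `Π` of size at least 2. -/
theorem stmt13 {V : Type*} [Fintype V] [DecidableEq V]
    (E₁ E₂ : V → V → Prop)
    (hacyc₁ : ∀ i, ¬ Relation.TransGen E₁ i i)
    (hacyc₂ : ∀ i, ¬ Relation.TransGen E₂ i i)
    (r : V → V → Prop) (hr : Equivalence r)
    (hmodel : PHModel E₁ r = PHModel E₂ r) :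
    ∀ i, (∃ j, j ≠ i ∧ r i j) → ∀ k, (E₁ k i ↔ E₂ k i) := by
  rintro i ⟨j, hji, hrij⟩ k
  constructor
  · exact fun h1 =>
      aux_stmt13 E₁ E₂ hacyc₁ hacyc₂ r hmodel.le i j k hji hrij h1
  · exact fun h2 =>
      aux_stmt13 E₂ E₁ hacyc₂ hacyc₁ r hmodel.ge i j k hji hrij h2
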